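/- arXiv:1708.01112 — 6 statements merged into one kernel-verified Lean document; each statement's English description precedes it below -/
import Mathlib

section
/- Let n ≥ 3 and let T be a subgroup of (ℤ/2)^n (viewed as n-tuples indexed by ℤ/n) such that |T| = 4, T is invariant under the cyclic shift of coordinates, and no nonidentity element t ∈ T has two cyclically consecutive coordinates both equal to 0. Then either 3 divides n and T consists of the zero tuple together with the three cyclic shifts of the pattern (0,1,1) repeated n/3 times, or 2 divides n and T consists of the zero tuple, the two alternating tuples (0,1,0,1,…) and (1,0,1,0,…), and the all-ones tuple. In particular gcd(n,6) ≠ 1. -/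
set_option maxHeartbeats 4000000 in
theorem stmt_0 (n : ℕ) (hn : 3 ≤ n)
    (T : AddSubgroup (ZMod n → ZMod 2))
    (hcard : Nat.card T = 4)
    (hshift : ∀ t ∈ T, (fun i => t (i - 1)) ∈ T)
    (hzero : ∀ t ∈ T, t ≠ 0 → ∀ j : ZMod n, ¬(t j = 0 ∧ t (j + 1) = 0)) :
    ((3 ∣ n ∧ (T : Set (ZMod n → ZMod 2)) =
        {0, fun j => if j.val % 3 = 0 then 0 else 1,
            fun j => if j.val % 3 = 1 then 0 else 1,
            fun j => if j.val % 3 = 2 then 0 else 1}) ∨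
      (2 ∣ n ∧ (T : Set (ZMod n → ZMod 2)) =
        {0, fun j => if j.val % 2 = 0 then 0 else 1,
            fun j => if j.val % 2 = 0 then 1 else 0,
            fun _ => 1})) ∧ Nat.gcd n 6 ≠ 1 := by
  haveI : NeZero n := ⟨by omega⟩
  clear hzero
  have two2 : ∀ x : ZMod 2, x = 0 ∨ x = 1 := by decide
  have addself : ∀ x : ZMod 2, x + x = 0 := by decide
  -- injectivity of shift at 0
  have hσ0 : ∀ t : ZMod n → ZMod 2, (fun i => t (i - 1)) = 0 → t = 0 := by
    intro t h
    funext i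
    have := congrFun h (i + 1)
    simpa using this
  have hTcard : (T : Set (ZMod n → ZMod 2)).ncard = 4 := by
    rw [← Nat.card_coe_set_eq]
    exact hcard
  -- T = {0, a, b, a+b} whenever 0, a, b distinct in T
  have quad : ∀ a b : ZMod n → ZMod 2, a ∈ T → b ∈ T → a ≠ 0 → b ≠ 0 → a ≠ b →
      (T : Set (ZMod n → ZMod 2)) = {0, a, b, a + b} := by
    intro a b haT hbT ha0 hb0 hab
    have hab0 : a + b ≠ 0 := by
      intro h
      apply hab
      have : a + b + b = b := by rw [h]; simp
      rwa [add_assoc, show b + b = 0 from funext fun i => addself (b i), add_zero] at this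
    have haba : a + b ≠ a := by
      intro h; apply hb0
      calc b = a + b - a := by abel
        _ = a - a := by rw [h]
        _ = 0 := sub_self a
    have habb : a + b ≠ b := by
      intro h; apply ha0
      have : a + b - b = b - b := by rw [h]
      simpa [add_sub_cancel_right] using this
    have hsub : ({0, a, b, a + b} : Set (ZMod n → ZMod 2)) ⊆ (T : Set _) := by
      intro x hx
      rcases hx with rfl | rfl | rfl | rfl
      · exact T.zero_mem
      · exact haT
      · exact hbT
      · exact T.add_mem haT hbT
    have hn4 : ({0, a, b, a + b} : Set (ZMod n → ZMod 2)).ncard = 4 := by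
      rw [Set.ncard_insert_of_notMem (by simp [Ne.symm ha0, Ne.symm hb0, Ne.symm hab0]),
        Set.ncard_insert_of_notMem (by simp [hab, Ne.symm haba]),
        Set.ncard_insert_of_notMem (by simp [Ne.symm habb]), Set.ncard_singleton]
    exact (Set.eq_of_subset_of_ncard_le hsub (by rw [hTcard, hn4]) (Set.toFinite _)).symm
  -- existence of nonzero elements
  have exa : ∃ a, a ∈ T ∧ a ≠ 0 := by
    by_contra h
    push_neg at h
    have hsub : (T : Set (ZMod n → ZMod 2)) ⊆ {0} := by
      intro x hx; simpa using h x hx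
    have := Set.ncard_le_ncard hsub (Set.toFinite _)
    rw [hTcard, Set.ncard_singleton] at this
    omega
  have exb : ∀ a, a ∈ T → ∃ b, b ∈ T ∧ b ≠ 0 ∧ b ≠ a := by
    intro a haT
    by_contra h
    push_neg at h
    have hsub : (T : Set (ZMod n → ZMod 2)) ⊆ {0, a} := by
      intro x hx
      by_cases h0 : x = 0
      · simp [h0]
      · simp [h x hx h0]
    have h1 := Set.ncard_le_ncard hsub (Set.toFinite _)
    have h2 := Set.ncard_insert_le (0 : ZMod n → ZMod 2) ({a} : Set _)
    rw [Set.ncard_singleton] at h2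
    rw [hTcard] at h1
    omega
  by_cases hfix : ∃ a, a ∈ T ∧ a ≠ 0 ∧ (fun i => a (i - 1)) = a
  · -- even case
    obtain ⟨a, haT, ha0, hafix⟩ := hfix
    -- a is constant, hence all ones
    have hconst : ∀ t : ZMod n → ZMod 2, (fun i => t (i - 1)) = t → ∀ j, t j = t 0 := by
      intro t ht j
      have hstep : ∀ j : ZMod n, t (j + 1) = t j := by
        intro j
        have := congrFun ht (j + 1)
        simpa using this.symm
      have hk : ∀ k : ℕ, t ((k : ZMod n)) = t 0 := by
        intro k
        induction k with
        | zero => simp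
        | succ m ih => push_cast; rw [hstep]; exact ih
      calc t j = t ((j.val : ℕ) : ZMod n) := by rw [ZMod.natCast_rightInverse j]
        _ = t 0 := hk j.val
    have ha1 : a = fun _ => (1 : ZMod 2) := by
      funext j
      rcases two2 (a 0) with h | h
      · exfalso; apply ha0; funext i; rw [hconst a hafix i, h]; rfl
      · rw [hconst a hafix j, h]
    obtain ⟨b, hbT, hb0, hba⟩ := exb a haT
    have hT := quad a b haT hbT ha0 hb0 (Ne.symm hba)
    -- σ b ∈ T; eliminate cases
    have hsbT : (fun i => b (i - 1)) ∈ T := hshift b hbT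
    have hsb : (fun i => b (i - 1)) = a + b := by
      have : (fun i => b (i - 1)) ∈ ({0, a, b, a + b} : Set (ZMod n → ZMod 2)) := hT ▸ hsbT
      rcases this with h | h | h | h
      · exact absurd (hσ0 b h) hb0
      · exfalso
        apply hba
        funext j
        have h1 := congrFun h (j + 1)
        simp only [add_sub_cancel_right] at h1
        rw [h1, ha1]
      · exact absurd (fun j => hconst b h j) (fun hc => by
          rcases two2 (b 0) with h0 | h0
          · exact hb0 (funext fun i => by rw [hc i, h0]; rfl)
          · exact hba (funext fun i => by rw [hc i, h0, ha1]))
      · exact h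
    -- b (j+1) = b j + 1
    have hstep : ∀ j : ZMod n, b (j + 1) = b j + 1 := by
      intro j
      have h1 := congrFun hsb (j + 1)
      simp only [add_sub_cancel_right, Pi.add_apply] at h1
      rw [ha1] at h1
      simp only at h1
      -- h1 : b j = 1 + b (j+1)
      rcases two2 (b j) with h | h <;> rcases two2 (b (j+1)) with h' | h' <;>
        rw [h, h'] <;> rw [h, h'] at h1 <;> first | rfl | (exfalso; exact absurd h1 (by decide))
    have hk : ∀ k : ℕ, b ((k : ZMod n)) = b 0 + (k : ZMod 2) := by
      intro k
      induction k with
      | zero => simp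
      | succ m ih => push_cast; rw [hstep, ih]; push_cast; ring
    have h2n : 2 ∣ n := by
      have := hk n
      rw [ZMod.natCast_self] at this
      have h2 : (n : ZMod 2) = 0 := by
        rcases two2 ((n : ZMod 2)) with h | h
        · exact h
        · rw [h] at this
          exfalso
          rcases two2 (b 0) with h0 | h0 <;> rw [h0] at this <;> exact absurd this (by decide)
      exact (ZMod.natCast_eq_zero_iff n 2).mp h2
    have hbform : ∀ j : ZMod n, b j = b 0 + ((j.val : ℕ) : ZMod 2) := by
      intro j
      calc b j = b ((j.val : ℕ) : ZMod n) := by rw [ZMod.natCast_rightInverse j]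
        _ = b 0 + (j.val : ZMod 2) := hk j.val
    have hmod : ∀ j : ZMod n, ((j.val : ℕ) : ZMod 2) = if j.val % 2 = 0 then 0 else 1 := by
      intro j
      rw [← ZMod.natCast_mod]
      rcases (show j.val % 2 = 0 ∨ j.val % 2 = 1 by omega) with h | h <;> simp [h]
    refine ⟨Or.inr ⟨h2n, ?_⟩, ?_⟩
    · rw [hT, ha1]
      rcases two2 (b 0) with h0 | h0
      · have hb : b = fun j => if j.val % 2 = 0 then (0 : ZMod 2) else 1 := by
          funext j; rw [hbform j, h0, hmod j, zero_add]
        have hab : (fun _ => (1 : ZMod 2)) + b = fun j => if j.val % 2 = 0 then (1 : ZMod 2) else 0 := by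
          funext j
          simp only [Pi.add_apply, hb]
          split <;> decide
        rw [hab, hb]
        ext x
        simp only [Set.mem_insert_iff, Set.mem_singleton_iff]
        tauto
      · have hb : b = fun j => if j.val % 2 = 0 then (1 : ZMod 2) else 0 := by
          funext j
          rw [hbform j, h0, hmod j]
          split <;> decide
        have hab : (fun _ => (1 : ZMod 2)) + b = fun j => if j.val % 2 = 0 then (0 : ZMod 2) else 1 := by
          funext j
          simp only [Pi.add_apply, hb]
          split <;> decide
        rw [hab, hb]
        ext x
        simp only [Set.mem_insert_iff, Set.mem_singleton_iff]
        tauto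
    · intro h
      have : 2 ∣ Nat.gcd n 6 := Nat.dvd_gcd h2n (by norm_num)
      rw [h] at this
      omega
  · -- 3 ∣ n case
    push_neg at hfix
    obtain ⟨a, haT, ha0⟩ := exa
    set b : ZMod n → ZMod 2 := fun i => a (i - 1) with hbdef
    have hbT : b ∈ T := hshift a haT
    have hb0 : b ≠ 0 := fun h => ha0 (hσ0 a h)
    have hba : a ≠ b := fun h => hfix a haT ha0 h.symm
    have hT := quad a b haT hbT ha0 hb0 hba
    set c : ZMod n → ZMod 2 := fun i => b (i - 1) with hcdef
    have hcT : c ∈ T := hshift b hbT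
    have hc : c = a + b := by
      have hmem : c ∈ ({0, a, b, a + b} : Set (ZMod n → ZMod 2)) := hT ▸ hcT
      rcases hmem with h | h | h | h
      · exact absurd (hσ0 b h) hb0
      · exfalso
        -- then a + b is a nonzero fixed point
        apply hfix (a + b) (T.add_mem haT hbT)
        · intro h0
          apply hba
          funext i
          have := congrFun h0 i
          simp only [Pi.add_apply, Pi.zero_apply] at this
          rcases two2 (a i) with h1 | h1 <;> rcases two2 (b i) with h2 | h2 <;>
            rw [h1, h2] <;> rw [h1, h2] at this <;> first | rfl | (exact absurd this (by decide))
        · funext i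
          simp only [Pi.add_apply]
          -- (a+b)(i-1) = a(i-1) + b(i-1) = b i + c i = b i + a i
          have : c i = a i := congrFun h i
          rw [show a (i - 1) = b i from rfl, show b (i - 1) = c i from rfl, this]
          exact add_comm (b i) (a i)
      · exfalso; exact hfix b hbT hb0 (by funext i; exact (congrFun h i))
      · exact h
    -- period 3 : σ c = a
    have hsc : ∀ i : ZMod n, c (i - 1) = a i := by
      intro i
      have h1 : c (i - 1) = b (i - 1) + a (i - 1) := by
        have := congrFun hc (i - 1)
        rw [this]
        exact add_comm (a (i-1)) (b (i-1))
      rw [h1, show b (i - 1) = c i from rfl, congrFun hc i]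
      simp only [Pi.add_apply]
      rw [show a (i - 1) = b i from rfl]
      rcases two2 (a i) with h1 | h1 <;> rcases two2 (b i) with h2 | h2 <;> rw [h1, h2] <;> decide
    have hper : ∀ j : ZMod n, a (j + 3) = a j := by
      intro j
      have := hsc (j + 3)
      -- c (j+3-1) = a (j+3);  c i = b (i-1) = a (i-2)
      have h2 : c (j + 3 - 1) = a j := by
        show b (j + 3 - 1 - 1) = a j
        show a (j + 3 - 1 - 1 - 1) = a j
        congr 1
        ring
      rw [h2] at this
      exact this.symm
    have hper3 : ∀ (j : ZMod n) (m : ℕ), a (j + ((3 * m : ℕ) : ZMod n)) = a j := by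
      intro j m
      induction m with
      | zero => simp
      | succ k ih =>
        have : ((3 * (k + 1) : ℕ) : ZMod n) = ((3 * k : ℕ) : ZMod n) + 3 := by push_cast; ring
        rw [this, ← add_assoc, hper, ih]
    have h3n : 3 ∣ n := by
      by_contra h3
      have hcop : Nat.Coprime 3 n := (Nat.Prime.coprime_iff_not_dvd Nat.prime_three).mpr h3
      have hu : IsUnit ((3 : ℕ) : ZMod n) := (ZMod.isUnit_iff_coprime 3 n).mpr hcop
      obtain ⟨y, hy⟩ := isUnit_iff_exists_inv.mp hu
      have hyv : ((3 * y.val : ℕ) : ZMod n) = 1 := by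
        rw [Nat.cast_mul, ZMod.natCast_rightInverse y]
        exact hy
      apply hfix a haT ha0
      funext i
      have h1 := hper3 (i - 1) y.val
      rw [hyv] at h1
      simpa using h1.symm
    have castval : ∀ j : ZMod n, ((j.val : ℕ) : ZMod n) = j := fun j => ZMod.natCast_rightInverse j
    have hA : ∀ k : ℕ, a ((k : ZMod n)) =
        if k % 3 = 0 then a 0 else if k % 3 = 1 then a 1 else a 2 := by
      intro k
      have h1 : (k : ZMod n) = ((k % 3 : ℕ) : ZMod n) + ((3 * (k / 3) : ℕ) : ZMod n) := by
        rw [← Nat.cast_add]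
        congr 1
        omega
      rw [h1, hper3]
      rcases (show k % 3 = 0 ∨ k % 3 = 1 ∨ k % 3 = 2 by omega) with h | h | h <;> simp [h]
    have hshiftform : ∀ (m : ℕ) (j : ZMod n), a (j + ((m : ℕ) : ZMod n)) =
        if (j.val + m) % 3 = 0 then a 0 else if (j.val + m) % 3 = 1 then a 1 else a 2 := by
      intro m j
      have h2 : ((j.val + m : ℕ) : ZMod n) = j + m := by rw [Nat.cast_add, castval j]
      rw [← h2, hA]
    have haform : ∀ j : ZMod n, a j =
        if j.val % 3 = 0 then a 0 else if j.val % 3 = 1 then a 1 else a 2 := by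
      intro j
      conv_lhs => rw [← castval j]
      rw [hA]
    have hb2 : ∀ j : ZMod n, b j = a (j + ((2 : ℕ) : ZMod n)) := by
      intro j
      show a (j - 1) = _
      rw [← hper (j - 1)]
      congr 1
      push_cast
      ring
    have hc1 : ∀ j : ZMod n, c j = a (j + ((1 : ℕ) : ZMod n)) := by
      intro j
      show a (j - 1 - 1) = _
      rw [← hper (j - 1 - 1)]
      congr 1
      push_cast
      ring
    have hrel : a 1 = a 0 + a 2 := by
      have h0 := congrFun hc 0
      have hb0' : b 0 = a 2 := by
        rw [hb2 0]
        have : (0 : ZMod n) + ((2 : ℕ) : ZMod n) = ((2 : ℕ) : ZMod n) := by ring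
        rw [this, hA]
        norm_num
      have hc0 : c 0 = a 1 := by
        rw [hc1 0]
        have : (0 : ZMod n) + ((1 : ℕ) : ZMod n) = ((1 : ℕ) : ZMod n) := by ring
        rw [this, hA]
        norm_num
      rw [hc0, Pi.add_apply, hb0'] at h0
      exact h0
    have hTc : (T : Set (ZMod n → ZMod 2)) = {0, a, b, c} := by rw [hT, ← hc]
    have hgoal : (T : Set (ZMod n → ZMod 2)) =
        {0, fun j => if j.val % 3 = 0 then 0 else 1,
            fun j => if j.val % 3 = 1 then 0 else 1,
            fun j => if j.val % 3 = 2 then 0 else 1} := by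
      have hx := two2 (a 0)
      have hy := two2 (a 1)
      have hz := two2 (a 2)
      rcases hx with hx | hx <;> rcases hy with hy | hy <;> rcases hz with hz | hz
      all_goals (rw [hx, hy] at hrel; rw [hz] at hrel)
      -- eliminate cases inconsistent with hrel or a ≠ 0
      case inl.inl.inl =>
        exfalso
        apply ha0
        funext j
        rw [haform j, hx, hy, hz]
        split_ifs <;> rfl
      case inl.inl.inr => exact absurd hrel (by decide)
      case inl.inr.inl => exact absurd hrel (by decide)
      case inr.inl.inl => exact absurd hrel (by decide)
      case inr.inr.inr => exact absurd hrel (by decide)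
      case inl.inr.inr =>
        -- (x,y,z) = (0,1,1) : a = p0, b = p1, c = p2
        have haP : a = fun j => if j.val % 3 = 0 then (0 : ZMod 2) else 1 := by
          funext j
          rw [haform j, hx, hy, hz]
          rcases (show j.val % 3 = 0 ∨ j.val % 3 = 1 ∨ j.val % 3 = 2 by omega) with h | h | h <;>
            simp [h]
        have hbP : b = fun j => if j.val % 3 = 1 then (0 : ZMod 2) else 1 := by
          funext j
          rw [hb2 j, hshiftform 2 j, hx, hy, hz]
          rcases (show j.val % 3 = 0 ∨ j.val % 3 = 1 ∨ j.val % 3 = 2 by omega) with h | h | h <;>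
            simp [Nat.add_mod, h]
        have hcP : c = fun j => if j.val % 3 = 2 then (0 : ZMod 2) else 1 := by
          funext j
          rw [hc1 j, hshiftform 1 j, hx, hy, hz]
          rcases (show j.val % 3 = 0 ∨ j.val % 3 = 1 ∨ j.val % 3 = 2 by omega) with h | h | h <;>
            simp [Nat.add_mod, h]
        rw [hTc, haP, hbP, hcP]
      case inr.inl.inr =>
        -- (x,y,z) = (1,0,1) : a = p1, b = p2, c = p0
        have haP : a = fun j => if j.val % 3 = 1 then (0 : ZMod 2) else 1 := by
          funext j
          rw [haform j, hx, hy, hz]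
          rcases (show j.val % 3 = 0 ∨ j.val % 3 = 1 ∨ j.val % 3 = 2 by omega) with h | h | h <;>
            simp [h]
        have hbP : b = fun j => if j.val % 3 = 2 then (0 : ZMod 2) else 1 := by
          funext j
          rw [hb2 j, hshiftform 2 j, hx, hy, hz]
          rcases (show j.val % 3 = 0 ∨ j.val % 3 = 1 ∨ j.val % 3 = 2 by omega) with h | h | h <;>
            simp [Nat.add_mod, h]
        have hcP : c = fun j => if j.val % 3 = 0 then (0 : ZMod 2) else 1 := by
          funext j
          rw [hc1 j, hshiftform 1 j, hx, hy, hz]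
          rcases (show j.val % 3 = 0 ∨ j.val % 3 = 1 ∨ j.val % 3 = 2 by omega) with h | h | h <;>
            simp [Nat.add_mod, h]
        rw [hTc, haP, hbP, hcP]
        ext x
        simp only [Set.mem_insert_iff, Set.mem_singleton_iff]
        tauto
      case inr.inr.inl =>
        -- (x,y,z) = (1,1,0) : a = p2, b = p0, c = p1
        have haP : a = fun j => if j.val % 3 = 2 then (0 : ZMod 2) else 1 := by
          funext j
          rw [haform j, hx, hy, hz]
          rcases (show j.val % 3 = 0 ∨ j.val % 3 = 1 ∨ j.val % 3 = 2 by omega) with h | h | h <;>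
            simp [h]
        have hbP : b = fun j => if j.val % 3 = 0 then (0 : ZMod 2) else 1 := by
          funext j
          rw [hb2 j, hshiftform 2 j, hx, hy, hz]
          rcases (show j.val % 3 = 0 ∨ j.val % 3 = 1 ∨ j.val % 3 = 2 by omega) with h | h | h <;>
            simp [Nat.add_mod, h]
        have hcP : c = fun j => if j.val % 3 = 1 then (0 : ZMod 2) else 1 := by
          funext j
          rw [hc1 j, hshiftform 1 j, hx, hy, hz]
          rcases (show j.val % 3 = 0 ∨ j.val % 3 = 1 ∨ j.val % 3 = 2 by omega) with h | h | h <;>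
            simp [Nat.add_mod, h]
        rw [hTc, haP, hbP, hcP]
        ext x
        simp only [Set.mem_insert_iff, Set.mem_singleton_iff]
        tauto
    refine ⟨Or.inl ⟨h3n, hgoal⟩, ?_⟩
    intro h
    have : 3 ∣ Nat.gcd n 6 := Nat.dvd_gcd h3n (by norm_num)
    rw [h] at this
    omega
end

section
/- Let n ≥ 3 with 3 ∤ n, and let T be a subgroup of (ℤ/2)^n of order 4 that is invariant under the cyclic coordinate shift and such that no nonidentity element of T has two cyclically consecutive zero coordinates. Then n is even and T = {0, (0,1,0,1,…,0,1), (1,0,1,0,…,1,0), (1,1,…,1)}. -/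
theorem stmt_1 (n : ℕ) (hn : 3 ≤ n) (h3 : ¬ (3 ∣ n))
    (T : AddSubgroup (ZMod n → ZMod 2))
    (hcard : Nat.card T = 4)
    (hshift : ∀ t ∈ T, (fun i => t (i - 1)) ∈ T)
    (hzero : ∀ t ∈ T, t ≠ 0 → ∀ j : ZMod n, ¬(t j = 0 ∧ t (j + 1) = 0)) :
    2 ∣ n ∧ (T : Set (ZMod n → ZMod 2)) =
      {0, fun j => if j.val % 2 = 0 then 0 else 1,
          fun j => if j.val % 2 = 0 then 1 else 0,
          fun _ => 1} := by
  have hne0 : NeZero n := ⟨by omega⟩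
  have hfin : Finite T := Nat.finite_of_card_ne_zero (by omega)
  -- a function periodic with a unit period is constant
  have hconst : ∀ (t : ZMod n → ZMod 2) (d : ZMod n), IsUnit d →
      (∀ y, t (y - d) = t y) → ∀ y z, t y = t z := by
    intro t d hu hper y z
    have hk : ∀ (k : ℕ) (y : ZMod n), t (y - d * k) = t y := by
      intro k
      induction k with
      | zero => simp
      | succ k ih =>
        intro y
        have h1 : y - d * ((k : ZMod n) + 1) = (y - d * k) - d := by ring
        have h2 : ((k + 1 : ℕ) : ZMod n) = (k : ZMod n) + 1 := by push_cast; ring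
        rw [h2, h1, hper, ih]
    obtain ⟨u, hu⟩ := hu
    set m : ZMod n := ((u⁻¹ : (ZMod n)ˣ) : ZMod n) * (y - z) with hm
    have h2 : d * m = y - z := by
      rw [hm, ← hu, ← mul_assoc]
      simp
    have h3 : ((m.val : ℕ) : ZMod n) = m := ZMod.natCast_zmod_val m
    have h4 := hk m.val y
    rw [h3, h2] at h4
    simpa using h4.symm
  -- every element of T is 2-periodic
  have hper2 : ∀ t ∈ T, ∀ y : ZMod n, t (y - 2) = t y := by
    intro t ht
    by_cases ht0 : t = 0
    · simp [ht0]
    have hsmem : ∀ k : ℕ, (fun i => t (i - (k : ZMod n))) ∈ T := by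
      intro k
      induction k with
      | zero => simpa using ht
      | succ k ih =>
        have h2 := hshift _ ih
        have he : (fun i : ZMod n => (fun i : ZMod n => t (i - (k : ZMod n))) (i - 1)) =
            fun i : ZMod n => t (i - ((k + 1 : ℕ) : ZMod n)) := by
          funext i
          simp only []
          congr 1
          push_cast
          ring
        exact he ▸ h2
    -- pigeonhole among 0 and four shifts of t
    set g : Fin 5 → T := fun k =>
      if k.val = 0 then ⟨0, T.zero_mem⟩
      else ⟨fun i => t (i - (((k.val - 1 : ℕ)) : ZMod n)), hsmem _⟩ with hg
    have hni : ¬ Function.Injective g := by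
      intro h
      have h5 := Nat.card_le_card_of_injective g h
      simp [hcard, Nat.card_eq_fintype_card] at h5
    obtain ⟨a, b, hab, hne⟩ := Function.not_injective_iff.mp hni
    have hcan : ∀ (a b : ZMod n), ((fun i => t (i - a)) = fun i => t (i - b)) →
        ∀ y, t (y - (b - a)) = t y := by
      intro a b h y
      have h1 := congrFun h (y + a)
      have e1 : y + a - a = y := by ring
      have e2 : y + a - b = y - (b - a) := by ring
      rw [e1, e2] at h1
      exact h1.symm
    have hz : ∀ (c : ZMod n), ((0 : ZMod n → ZMod 2) = fun i => t (i - c)) → False := by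
      intro c h
      apply ht0
      funext x
      have h1 := congrFun h (x + c)
      simp only [Pi.zero_apply] at h1
      have e : x + c - c = x := by ring
      rw [e] at h1
      exact h1.symm
    have key : ∃ d : ZMod n, (d = 1 ∨ d = 2 ∨ d = 3) ∧ ∀ y, t (y - d) = t y := by
      have hab' : (g a : ZMod n → ZMod 2) = g b := congrArg _ hab
      fin_cases a <;> fin_cases b <;>
        simp only [hg, Fin.isValue, Fin.val_zero, Fin.val_one] at hab' hne <;>
        try norm_num at hab' hne ⊢
      all_goals first
        | exact (hne rfl).elim
        | exact (hz _ hab').elim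
        | exact (hz _ hab'.symm).elim
        | exact absurd (funext fun x => (congrFun hab' x).symm) ht0
        | exact absurd (funext fun x => congrFun hab' x) ht0
        | (left; intro y; exact (congrFun hab' y).symm)
        | (left; intro y; exact congrFun hab' y)
        | (right; left; intro y; exact (congrFun hab' y).symm)
        | (right; left; intro y; exact congrFun hab' y)
        | (right; right; intro y; exact (congrFun hab' y).symm)
        | (right; right; intro y; exact congrFun hab' y)
        | (left; have h9 := hcan _ _ hab'; norm_num at h9; exact h9)
        | (left; have h9 := hcan _ _ hab'.symm; norm_num at h9; exact h9)
        | (right; left; have h9 := hcan _ _ hab'; norm_num at h9; exact h9)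
        | (right; left; have h9 := hcan _ _ hab'.symm; norm_num at h9; exact h9)
        | (right; right; have h9 := hcan _ _ hab'; norm_num at h9; exact h9)
        | (right; right; have h9 := hcan _ _ hab'.symm; norm_num at h9; exact h9)
    obtain ⟨d, hd, hper⟩ := key
    rcases hd with rfl | rfl | rfl
    · intro y
      have e : y - 2 = y - 1 - 1 := by ring
      rw [e, hper, hper]
    · exact hper
    · have hcop3 : Nat.Coprime 3 n := (Nat.Prime.coprime_iff_not_dvd Nat.prime_three).mpr h3
      have hu3 : IsUnit (3 : ZMod n) := by
        have h6 := (ZMod.isUnit_iff_coprime 3 n).mpr hcop3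
        simpa using h6
      intro y
      exact hconst t 3 hu3 hper (y - 2) y
  -- n is even
  have heven : 2 ∣ n := by
    by_contra h2n
    have hcop2 : Nat.Coprime 2 n := (Nat.Prime.coprime_iff_not_dvd Nat.prime_two).mpr h2n
    have hu2 : IsUnit (2 : ZMod n) := by
      have h6 := (ZMod.isUnit_iff_coprime 2 n).mpr hcop2
      simpa using h6
    have hf : Function.Injective (fun t : T => t.1 0) := by
      intro t t' h
      ext y
      calc t.1 y = t.1 0 := hconst t.1 2 hu2 (hper2 t.1 t.2) y 0
        _ = t'.1 0 := h
        _ = t'.1 y := (hconst t'.1 2 hu2 (hper2 t'.1 t'.2) y 0).symm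
    have h5 := Nat.card_le_card_of_injective _ hf
    simp [hcard, Nat.card_eq_fintype_card] at h5
  refine ⟨heven, ?_⟩
  -- every element of T is determined by its values at 0 and 1
  have hP : ∀ t ∈ T, ∀ j : ZMod n, t j = if j.val % 2 = 0 then t 0 else t 1 := by
    intro t ht
    have h2 := hper2 t ht
    have aux : ∀ m : ℕ, t (m : ZMod n) = if m % 2 = 0 then t 0 else t 1 := by
      intro m
      induction m using Nat.strong_induction_on with
      | _ m ih =>
        rcases m with _ | _ | k
        · simp
        · simp [Nat.cast_one]
        · have e : ((k + 2 : ℕ) : ZMod n) = (k : ZMod n) + 2 := by push_cast; ring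
          have e2 : (k : ZMod n) + 2 - 2 = (k : ZMod n) := by ring
          have h4 := h2 ((k : ZMod n) + 2)
          rw [e2] at h4
          have e3 : (k + 2) % 2 = k % 2 := by omega
          rw [e, ← h4, ih k (by omega), e3]
    intro j
    have := aux j.val
    rwa [ZMod.natCast_zmod_val j] at this
  -- T maps bijectively to pairs of values
  set f : T → ZMod 2 × ZMod 2 := fun t => (t.1 0, t.1 1) with hf
  have hinj : Function.Injective f := by
    intro t t' h
    simp only [hf, Prod.mk.injEq] at h
    ext y
    rw [hP t.1 t.2 y, hP t'.1 t'.2 y, h.1, h.2]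
  have hbij : Function.Bijective f :=
    (Nat.bijective_iff_injective_and_card f).mpr ⟨hinj, by simp [hcard]⟩
  have two_cases : ∀ a : ZMod 2, a = 0 ∨ a = 1 := by decide
  ext x
  simp only [Set.mem_insert_iff, Set.mem_singleton_iff, SetLike.mem_coe]
  constructor
  · intro hx
    have hxP := hP x hx
    rcases two_cases (x 0) with h0 | h0 <;> rcases two_cases (x 1) with h1 | h1
    · left; funext j; rw [hxP j, h0, h1]; simp
    · right; left; funext j; rw [hxP j, h0, h1]
    · right; right; left; funext j; rw [hxP j, h0, h1]
    · right; right; right; funext j; rw [hxP j, h0, h1]; simp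
  · intro hx
    rcases hx with rfl | rfl | rfl | rfl
    · exact T.zero_mem
    · obtain ⟨t, htv⟩ := hbij.2 (0, 1)
      simp only [hf, Prod.mk.injEq] at htv
      have : (fun j : ZMod n => if j.val % 2 = 0 then (0 : ZMod 2) else 1) = t.1 := by
        funext j
        rw [hP t.1 t.2 j, htv.1, htv.2]
      rw [this]; exact t.2
    · obtain ⟨t, htv⟩ := hbij.2 (1, 0)
      simp only [hf, Prod.mk.injEq] at htv
      have : (fun j : ZMod n => if j.val % 2 = 0 then (1 : ZMod 2) else 0) = t.1 := by
        funext j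
        rw [hP t.1 t.2 j, htv.1, htv.2]
      rw [this]; exact t.2
    · obtain ⟨t, htv⟩ := hbij.2 (1, 1)
      simp only [hf, Prod.mk.injEq] at htv
      have : (fun _ : ZMod n => (1 : ZMod 2)) = t.1 := by
        funext j
        rw [hP t.1 t.2 j, htv.1, htv.2]
        simp
      rw [this]; exact t.2
end

section
/- For n ≥ 3 with n ≠ 4, in the wreath graph C_n[2K_1] the 2-element sets B_i = {(i,0),(i,1)} (for i ∈ ℤ/n) are blocks of imprimitivity for the full automorphism group: every automorphism maps each B_i onto some B_j. -/
/-- The wreath graph `C_n[2K_1]`. -/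
def wreath (n : ℕ) : SimpleGraph (ZMod n × Fin 2) where
  Adj u v := u ≠ v ∧ (v.1 = u.1 + 1 ∨ u.1 = v.1 + 1)
  symm := ⟨by rintro u v ⟨h1, h2⟩; exact ⟨h1.symm, h2.symm⟩⟩
  loopless := ⟨by rintro u ⟨h, _⟩; exact h rfl⟩

lemma cast_ne_zero_of (n k : ℕ) (hn : 0 < n) (hk : ¬ n ∣ k) : ((k : ℕ) : ZMod n) ≠ 0 := by
  haveI : NeZero n := ⟨hn.ne'⟩
  intro h
  exact hk ((ZMod.natCast_eq_zero_iff k n).mp h)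

lemma zmod_one_ne_zero (n : ℕ) (hn : 3 ≤ n) : (1 : ZMod n) ≠ 0 := by
  have := cast_ne_zero_of n 1 (by omega)
    (fun h => by have := Nat.le_of_dvd one_pos h; omega)
  simpa using this

lemma same_nbhd (n : ℕ) (hn : 3 ≤ n) (hn4 : n ≠ 4)
    (u v : ZMod n × Fin 2)
    (h : ∀ w, (wreath n).Adj u w ↔ (wreath n).Adj v w) : u.1 = v.1 := by
  have h1 : (1 : ZMod n) ≠ 0 := zmod_one_ne_zero n hn
  by_contra hne
  have hw1 : (wreath n).Adj u (u.1 + 1, 0) := by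
    refine ⟨fun heq => ?_, Or.inl rfl⟩
    have h2 := congrArg Prod.fst heq
    exact h1 (by linear_combination -h2)
  obtain ⟨-, hc1⟩ := (h _).mp hw1
  have hw2 : (wreath n).Adj u (u.1 - 1, 0) := by
    refine ⟨fun heq => ?_, Or.inr (show u.1 = u.1 - 1 + 1 by ring)⟩
    have h2 := congrArg Prod.fst heq
    exact h1 (by linear_combination h2)
  obtain ⟨-, hc2⟩ := (h _).mp hw2
  simp only at hc1 hc2
  have e1 : v.1 = u.1 + 2 := by
    rcases hc1 with h' | h'
    · exact absurd (show u.1 = v.1 by linear_combination h') hne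
    · linear_combination h'
  have e2 : v.1 = u.1 - 2 := by
    rcases hc2 with h' | h'
    · linear_combination -h'
    · exact absurd (show u.1 = v.1 by linear_combination -h') hne
  have h4 : (4 : ZMod n) = 0 := by
    have h5 := e1.symm.trans e2
    linear_combination h5
  have := cast_ne_zero_of n 4 (by omega)
    (fun h => by have := Nat.le_of_dvd (by norm_num) h; interval_cases n <;> omega)
  exact this (by simpa using h4)

theorem stmt_9 (n : ℕ) (hn : 3 ≤ n) (hn4 : n ≠ 4)
    (φ : wreath n ≃g wreath n) (i : ZMod n) :
    ∃ j : ZMod n,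
      (fun v => φ v) '' ({(i, 0), (i, 1)} : Set (ZMod n × Fin 2)) =
        ({(j, 0), (j, 1)} : Set (ZMod n × Fin 2)) := by
  have h1 : (1 : ZMod n) ≠ 0 := zmod_one_ne_zero n hn
  set u : ZMod n × Fin 2 := (i, 0) with hu_def
  set v : ZMod n × Fin 2 := (i, 1) with hv_def
  have hsame : ∀ w, (wreath n).Adj u w ↔ (wreath n).Adj v w := by
    intro w
    constructor <;> rintro ⟨hne2, hc⟩ <;> refine ⟨fun heq => ?_, hc⟩ <;>
      · have h2 : w.1 = i := congrArg Prod.fst heq.symm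
        rcases hc with h' | h' <;> rw [h2] at h' <;> simp only [hu_def, hv_def] at h' <;>
          first
            | exact h1 (by linear_combination h')
            | exact h1 (by linear_combination -h')
  have hsame' : ∀ w, (wreath n).Adj (φ u) w ↔ (wreath n).Adj (φ v) w := fun w => by
    rw [← φ.apply_symm_apply w, φ.map_adj_iff, φ.map_adj_iff, hsame]
  have hfst : (φ u).1 = (φ v).1 := same_nbhd n hn hn4 _ _ hsame'
  have hinj : φ u ≠ φ v := by
    intro h
    have h' := φ.injective h
    simp [hu_def, hv_def, Prod.ext_iff] at h'
  have hsnd : (φ u).2 ≠ (φ v).2 := fun h => hinj (Prod.ext hfst h)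
  refine ⟨(φ u).1, ?_⟩
  have himg : (fun v => φ v) '' ({(i, 0), (i, 1)} : Set (ZMod n × Fin 2)) = {φ u, φ v} := by
    simp [Set.image_insert_eq, hu_def, hv_def]
  rw [himg, show φ u = ((φ u).1, (φ u).2) from rfl,
    show φ v = ((φ u).1, (φ v).2) from (Prod.ext hfst.symm rfl)]
  have key : ∀ (a b : Fin 2), a ≠ b →
      ({((φ u).1, a), ((φ u).1, b)} : Set (ZMod n × Fin 2)) = {((φ u).1, 0), ((φ u).1, 1)} := by
    intro a b hab
    fin_cases a <;> fin_cases b <;> simp_all [Set.pair_comm]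
  exact key _ _ hsnd
end

section
/- For n ≥ 3 with n ≠ 4, the automorphism group of the wreath graph C_n[2K_1] has order n · 2^{n+1}; it is generated by the rotation ρ: (i,s) ↦ (i+1,s), the reflection μ: (i,s) ↦ (−i,s), and the transposition σ_0 swapping (0,0) with (0,1) and fixing all other vertices, and the elementary abelian subgroup N generated by all coordinate-swaps σ_i is normal in it. -/
/-- The full automorphism group of a simple graph, as a subgroup of `Equiv.Perm V`. -/
def autGroup {V : Type*} (Γ : SimpleGraph V) : Subgroup (Equiv.Perm V) where
  carrier := {g | ∀ u v, Γ.Adj u v ↔ Γ.Adj (g u) (g v)}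
  one_mem' := by intro u v; rfl
  mul_mem' := by
    intro g h hg hh u v
    exact (hh u v).trans (hg (h u) (h v))
  inv_mem' := by
    intro g hg u v
    simpa using (hg (g⁻¹ u) (g⁻¹ v)).symm

/-- The rotation `ρ : (i,s) ↦ (i+1,s)`. -/
def wRho (n : ℕ) : Equiv.Perm (ZMod n × Fin 2) :=
  Equiv.prodCongr (Equiv.addRight 1) (Equiv.refl _)

/-- The reflection `μ : (i,s) ↦ (-i,s)`. -/
def wMu (n : ℕ) : Equiv.Perm (ZMod n × Fin 2) :=
  Equiv.prodCongr (Equiv.neg (ZMod n)) (Equiv.refl _)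

/-- The coordinate swap `σ_i`, interchanging `(i,0)` and `(i,1)` and fixing all
other vertices. -/
def sigmaSwap (n : ℕ) (i : ZMod n) : Equiv.Perm (ZMod n × Fin 2) :=
  Equiv.swap (i, 0) (i, 1)

namespace WreathAux

variable {n : ℕ}

lemma fin2 : ∀ s : Fin 2, s = 0 ∨ s = 1 := by decide

lemma fin2cov : ∀ x y z : Fin 2, x ≠ y → z = x ∨ z = y := by decide

lemma prodext {α β : Type*} {p q : α × β} (h1 : p.1 = q.1) (h2 : p.2 = q.2) : p = q := by
  cases p; cases q; cases h1; cases h2; rfl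

def flipIf (b : Bool) : Equiv.Perm (Fin 2) := if b then Equiv.swap 0 1 else Equiv.refl _

@[simp] lemma flipIf_false (s : Fin 2) : flipIf false s = s := rfl
@[simp] lemma flipIf_true (s : Fin 2) : flipIf true s = Equiv.swap 0 1 s := rfl
lemma flipIf_true_zero : flipIf true (0 : Fin 2) = 1 := by decide
lemma flipIf_true_one : flipIf true (1 : Fin 2) = 0 := by decide

def dih (n : ℕ) (ε : Bool) (c : ZMod n) : Equiv.Perm (ZMod n) :=
  ((if ε then Equiv.refl (ZMod n) else Equiv.neg (ZMod n))).trans (Equiv.addLeft c)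

@[simp] lemma dih_true (c i : ZMod n) : dih n true c i = c + i := rfl
@[simp] lemma dih_false (c i : ZMod n) : dih n false c i = c + -i := rfl

/-- Normal form for automorphisms of the wreath graph. -/
def nf (n : ℕ) (ε : Bool) (c : ZMod n) (t : ZMod n → Bool) : Equiv.Perm (ZMod n × Fin 2) :=
  Equiv.prodShear (dih n ε c) (fun i => flipIf (t i))

lemma nf_apply (ε : Bool) (c : ZMod n) (t : ZMod n → Bool) (p : ZMod n × Fin 2) :
    nf n ε c t p = (dih n ε c p.1, flipIf (t p.1) p.2) := rfl

lemma adj_iff (h1 : (1 : ZMod n) ≠ 0) (u v : ZMod n × Fin 2) :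
    (wreath n).Adj u v ↔ (v.1 = u.1 + 1 ∨ u.1 = v.1 + 1) := by
  constructor
  · exact fun h => h.2
  · intro h
    refine ⟨?_, h⟩
    rintro rfl
    rcases h with h | h <;> exact h1 (by linear_combination -h)

lemma nf_mem (h1 : (1 : ZMod n) ≠ 0) (ε : Bool) (c : ZMod n) (t : ZMod n → Bool) :
    nf n ε c t ∈ autGroup (wreath n) := by
  intro u v
  rw [adj_iff h1, adj_iff h1]
  obtain ⟨a, s⟩ := u; obtain ⟨b, r⟩ := v
  cases ε <;>
    simp only [nf_apply, dih_true, dih_false] <;>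
    constructor <;>
    rintro (h | h) <;>
    first
      | (left; linear_combination h)
      | (left; linear_combination -h)
      | (right; linear_combination h)
      | (right; linear_combination -h)

lemma step_all [NeZero n] (h2 : (2 : ZMod n) ≠ 0) {f : ZMod n → ZMod n}
    (finj : Function.Injective f) {d : ZMod n}
    (hd : ∀ i, f (i + 1) = f i + d ∨ f (i + 1) = f i - d)
    (h0 : f 1 = f 0 + d) : ∀ i, f i = f 0 + d * i := by
  have hs : ∀ k : ℕ, f ((k : ZMod n) + 1) = f (k : ZMod n) + d := by
    intro k
    induction k with
    | zero => simpa using h0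
    | succ m ih =>
      push_cast
      rcases hd ((m : ZMod n) + 1) with h | h
      · exact h
      · exfalso
        have he : f ((m : ZMod n) + 1 + 1) = f (m : ZMod n) := by rw [h, ih]; ring
        exact h2 (by linear_combination finj he)
  have hl : ∀ k : ℕ, f (k : ZMod n) = f 0 + d * k := by
    intro k
    induction k with
    | zero => simp
    | succ m ih => push_cast; rw [hs m, ih]; ring
  intro i
  obtain ⟨k, rfl⟩ := ZMod.natCast_zmod_surjective i
  exact hl k

lemma aut_nf (hn : 3 ≤ n) (hn4 : n ≠ 4) {g : Equiv.Perm (ZMod n × Fin 2)}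
    (hg : g ∈ autGroup (wreath n)) : ∃ ε c t, g = nf n ε c t := by
  haveI : NeZero n := ⟨by omega⟩
  have hdvd : ∀ k : ℕ, 0 < k → ¬ n ∣ k → ((k : ZMod n) ≠ 0) := by
    intro k hk hnk h
    exact hnk ((ZMod.natCast_eq_zero_iff k n).mp h)
  have h1 : (1 : ZMod n) ≠ 0 := by
    have := hdvd 1 one_pos (by intro h; have := Nat.le_of_dvd one_pos h; omega)
    simpa using this
  have h2 : (2 : ZMod n) ≠ 0 := by
    have := hdvd 2 two_pos (by intro h; have := Nat.le_of_dvd two_pos h; omega)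
    simpa using this
  have h4 : (4 : ZMod n) ≠ 0 := by
    have := hdvd 4 (by norm_num) (by
      intro h; have h' := Nat.le_of_dvd (by norm_num) h
      interval_cases n <;> omega)
    simpa using this
  have hg' : ∀ u v, (wreath n).Adj u v ↔ (wreath n).Adj (g u) (g v) := hg
  have hgc : ∀ u v : ZMod n × Fin 2,
      (v.1 = u.1 + 1 ∨ u.1 = v.1 + 1) ↔ ((g v).1 = (g u).1 + 1 ∨ (g u).1 = (g v).1 + 1) := by
    intro u v
    rw [← adj_iff h1, ← adj_iff h1]
    exact hg' u v
  have fib : ∀ i : ZMod n, (g (i, 1)).1 = (g (i, 0)).1 := by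
    intro i
    set a := (g (i, 0)).1 with ha
    set b := (g (i, 1)).1 with hb
    have key : ∀ j : ZMod n, (j = a + 1 ∨ a = j + 1) ↔ (j = b + 1 ∨ b = j + 1) := by
      intro j
      have hw : g (g⁻¹ (j, (0 : Fin 2))) = (j, 0) := g.apply_symm_apply _
      have e0 := hgc (i, 0) (g⁻¹ (j, (0 : Fin 2)))
      have e1 := hgc (i, 1) (g⁻¹ (j, (0 : Fin 2)))
      rw [hw] at e0 e1
      exact e0.symm.trans e1
    have k1 : a + 1 = b + 1 ∨ b = (a + 1) + 1 := (key (a + 1)).mp (Or.inl rfl)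
    have k2 : b + 1 = a + 1 ∨ a = (b + 1) + 1 := (key (b + 1)).mpr (Or.inl rfl)
    rcases k1 with k1 | k1
    · exact (add_right_cancel k1).symm
    · rcases k2 with k2 | k2
      · exact add_right_cancel k2
      · exact absurd (by linear_combination - k1 - k2) h4
  set f : ZMod n → ZMod n := fun i => (g (i, 0)).1 with hf
  have fibne : ∀ i : ZMod n, (g (i, 0)).2 ≠ (g (i, 1)).2 := by
    intro i h
    have he : g (i, (0 : Fin 2)) = g (i, 1) := prodext (fib i).symm h
    have := g.injective he
    simp only [Prod.mk.injEq] at this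
    exact absurd this.2 (by decide)
  have finv : ∀ (i : ZMod n) (p : ZMod n × Fin 2), p.1 = f i → (g⁻¹ p).1 = i := by
    intro i p hp
    rcases fin2cov (g (i, 0)).2 (g (i, 1)).2 p.2 (fibne i) with h | h
    · have : p = g (i, 0) := prodext hp h
      rw [this]; exact congrArg Prod.fst (g.symm_apply_apply _)
    · have : p = g (i, 1) := prodext (by rw [hp]; exact (fib i).symm) h
      rw [this]; exact congrArg Prod.fst (g.symm_apply_apply _)
  have f_inj : Function.Injective f := by
    intro i j h
    have hi := finv i (f i, 0) rfl
    have hj := finv j (f i, 0) (by rw [h])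
    exact hi.symm.trans hj
  have step : ∀ i : ZMod n, f (i + 1) = f i + 1 ∨ f (i + 1) = f i - 1 := by
    intro i
    rcases (hgc (i, 0) (i + 1, 0)).mp (Or.inl rfl) with h | h
    · exact Or.inl h
    · exact Or.inr (by linear_combination -h)
  obtain ⟨ε, hε⟩ : ∃ ε : Bool, f 1 = f 0 + (cond ε 1 (-1) : ZMod n) := by
    rcases step 0 with h0 | h0
    · exact ⟨true, by simpa using h0⟩
    · exact ⟨false, by simpa [sub_eq_add_neg] using h0⟩
  have step' : ∀ i, f (i + 1) = f i + (cond ε 1 (-1) : ZMod n) ∨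
      f (i + 1) = f i - (cond ε 1 (-1) : ZMod n) := by
    intro i
    rcases step i with h | h <;> cases ε <;> simp only [Bool.cond_true, Bool.cond_false] <;>
      first
        | exact Or.inl (by linear_combination h)
        | exact Or.inr (by linear_combination h)
  have hlin : ∀ i, f i = f 0 + (cond ε 1 (-1) : ZMod n) * i :=
    step_all h2 f_inj step' hε
  refine ⟨ε, f 0, fun i => decide ((g (i, 0)).2 = 1), ?_⟩
  apply Equiv.ext
  rintro ⟨i, s⟩
  rw [nf_apply]
  refine prodext ?_ ?_
  · show (g (i, s)).1 = dih n ε (f 0) i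
    have hfi : (g (i, s)).1 = f i := by
      rcases fin2 s with rfl | rfl
      · rfl
      · exact fib i
    rw [hfi, hlin i]
    cases ε
    · rw [dih_false]; simp only [Bool.cond_false]; ring
    · rw [dih_true]; simp only [Bool.cond_true]; ring
  · show (g (i, s)).2 = flipIf (decide ((g (i, 0)).2 = 1)) s
    rcases fin2 s with rfl | rfl
    · rcases fin2 (g (i, 0)).2 with h | h <;> rw [h] <;> decide
    · have hne := fibne i
      rcases fin2 (g (i, 0)).2 with h | h <;> rcases fin2 (g (i, 1)).2 with h' | h'
      · rw [h, h'] at hne; exact absurd rfl hne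
      · rw [h', h]; decide
      · rw [h', h]; decide
      · rw [h, h'] at hne; exact absurd rfl hne

lemma nf_one : nf n true 0 (fun _ => false) = 1 := by
  apply Equiv.ext
  rintro ⟨i, s⟩
  rw [nf_apply]
  exact prodext (by simp) (by simp)

lemma rho_eq : wRho n = nf n true 1 (fun _ => false) := by
  apply Equiv.ext
  rintro ⟨i, s⟩
  rw [nf_apply]
  exact prodext (by simp [wRho, add_comm]) (by simp [wRho])

lemma mu_eq : wMu n = nf n false 0 (fun _ => false) := by
  apply Equiv.ext
  rintro ⟨i, s⟩
  rw [nf_apply]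
  exact prodext (by simp [wMu]) (by simp [wMu])

lemma sigma_eq (i : ZMod n) : sigmaSwap n i = nf n true 0 (fun j => decide (j = i)) := by
  apply Equiv.ext
  rintro ⟨j, s⟩
  rw [nf_apply]
  by_cases hj : j = i
  · subst hj
    have hd : decide (j = j) = true := by simp
    rw [hd]
    rcases fin2 s with rfl | rfl
    · rw [sigmaSwap, Equiv.swap_apply_left, flipIf_true_zero]
      exact prodext (by simp) rfl
    · rw [sigmaSwap, Equiv.swap_apply_right, flipIf_true_one]
      exact prodext (by simp) rfl
  · have hd : decide (j = i) = false := by simp [hj]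
    rw [hd, flipIf_false, sigmaSwap, Equiv.swap_apply_of_ne_of_ne
      (fun h => hj (congrArg Prod.fst h)) (fun h => hj (congrArg Prod.fst h))]
    exact prodext (by simp) rfl

lemma nf_inj (h2 : (2 : ZMod n) ≠ 0) {ε ε' : Bool} {c c' : ZMod n} {t t' : ZMod n → Bool}
    (h : nf n ε c t = nf n ε' c' t') : ε = ε' ∧ c = c' ∧ t = t' := by
  have hp : ∀ p, nf n ε c t p = nf n ε' c' t' p := fun p => by rw [h]
  have hc : c = c' := by
    have := congrArg Prod.fst (hp (0, 0))
    rw [nf_apply, nf_apply] at this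
    cases ε <;> cases ε' <;> simpa using this
  have he : ε = ε' := by
    have := congrArg Prod.fst (hp (1, 0))
    rw [nf_apply, nf_apply, hc] at this
    cases ε <;> cases ε' <;> simp only [dih_true, dih_false] at this
    · rfl
    · exact absurd (by linear_combination -this) h2
    · exact absurd (by linear_combination this) h2
    · rfl
  have ht : t = t' := by
    funext i
    have := congrArg Prod.snd (hp (i, 0))
    rw [nf_apply, nf_apply] at this
    have h2' : flipIf (t i) 0 = flipIf (t' i) 0 := this
    cases htt : t i <;> cases htt' : t' i <;> rw [htt, htt'] at h2' <;>
      first | rfl | (exact absurd h2' (by decide))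
  exact ⟨he, hc, ht⟩

lemma rho_pow (k : ℕ) (p : ZMod n × Fin 2) : ((wRho n) ^ k) p = (p.1 + (k : ZMod n), p.2) := by
  induction k generalizing p with
  | zero => simp
  | succ m ih =>
    have hr : ∀ q : ZMod n × Fin 2, wRho n q = (q.1 + 1, q.2) := fun q => rfl
    rw [pow_succ', Equiv.Perm.mul_apply, ih p, hr]
    exact prodext (by push_cast; ring) rfl

lemma nf_swaps_mem [NeZero n] (K : Subgroup (Equiv.Perm (ZMod n × Fin 2)))
    (hK : ∀ i, sigmaSwap n i ∈ K) (t : ZMod n → Bool) : nf n true 0 t ∈ K := by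
  classical
  suffices H : ∀ s : Finset (ZMod n), ∀ t : ZMod n → Bool,
      (∀ i, t i = true → i ∈ s) → nf n true 0 t ∈ K from
    H Finset.univ t (fun i _ => Finset.mem_univ i)
  intro s
  induction s using Finset.induction_on with
  | empty =>
    intro t ht
    have : t = fun _ => false := by
      funext i
      cases h : t i
      · rfl
      · exact absurd (ht i h) (Finset.notMem_empty i)
    rw [this, nf_one]
    exact one_mem K
  | @insert a s' ha ih =>
    intro t ht
    by_cases hta : t a = true
    · have hdec : nf n true 0 t =
          sigmaSwap n a * nf n true 0 (fun j => if j = a then false else t j) := by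
        apply Equiv.ext
        rintro ⟨j, sj⟩
        rw [Equiv.Perm.mul_apply, nf_apply, nf_apply]
        by_cases hj : j = a
        · subst hj
          rw [if_pos rfl, hta, flipIf_false]
          simp only [dih_true, zero_add]
          rcases fin2 sj with rfl | rfl
          · rw [sigmaSwap, Equiv.swap_apply_left, flipIf_true_zero]
          · rw [sigmaSwap, Equiv.swap_apply_right, flipIf_true_one]
        · rw [if_neg hj]
          simp only [dih_true, zero_add]
          rw [sigmaSwap, Equiv.swap_apply_of_ne_of_ne
            (fun h => hj (congrArg Prod.fst h)) (fun h => hj (congrArg Prod.fst h))]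
      rw [hdec]
      refine mul_mem (hK a) (ih _ ?_)
      intro i hi
      by_cases hia : i = a
      · rw [hia, if_pos rfl] at hi; exact absurd hi (by simp)
      · rw [if_neg hia] at hi
        rcases Finset.mem_insert.mp (ht i hi) with h | h
        · exact absurd h hia
        · exact h
    · apply ih t
      intro i hi
      rcases Finset.mem_insert.mp (ht i hi) with h | h
      · exact absurd (h ▸ hi) hta
      · exact h

end WreathAux

open WreathAux in
theorem stmt_10 (n : ℕ) (hn : 3 ≤ n) (hn4 : n ≠ 4) :
    Nat.card (autGroup (wreath n)) = n * 2 ^ (n + 1) ∧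
    autGroup (wreath n) = Subgroup.closure {wRho n, wMu n, sigmaSwap n 0} ∧
    Subgroup.closure (Set.range (sigmaSwap n)) ≤ autGroup (wreath n) ∧
    ∀ g ∈ autGroup (wreath n), ∀ x ∈ Subgroup.closure (Set.range (sigmaSwap n)),
      g * x * g⁻¹ ∈ Subgroup.closure (Set.range (sigmaSwap n)) := by
  haveI : NeZero n := ⟨by omega⟩
  have h1 : (1 : ZMod n) ≠ 0 := by
    intro h
    have := (ZMod.natCast_eq_zero_iff 1 n).mp (by simpa using h)
    have := Nat.le_of_dvd one_pos this
    omega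
  have h2 : (2 : ZMod n) ≠ 0 := by
    intro h
    have := (ZMod.natCast_eq_zero_iff 2 n).mp (by simpa using h)
    have := Nat.le_of_dvd two_pos this
    omega
  have nfmem : ∀ ε c t, nf n ε c t ∈ autGroup (wreath n) := fun ε c t => nf_mem h1 ε c t
  refine ⟨?_, ?_, ?_, ?_⟩
  · -- cardinality
    have e : (Bool × ZMod n × (ZMod n → Bool)) ≃ (autGroup (wreath n)) :=
      Equiv.ofBijective (fun x => ⟨nf n x.1 x.2.1 x.2.2, nfmem x.1 x.2.1 x.2.2⟩)
        (by
          constructor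
          · rintro ⟨ε, c, t⟩ ⟨ε', c', t'⟩ h
            obtain ⟨he, hc, ht⟩ := nf_inj h2 (Subtype.ext_iff.mp h)
            subst he; subst hc; subst ht; rfl
          · rintro ⟨g, hg⟩
            obtain ⟨ε, c, t, rfl⟩ := aut_nf hn hn4 hg
            exact ⟨(ε, c, t), rfl⟩)
    rw [← Nat.card_congr e]
    simp only [Nat.card_eq_fintype_card, Fintype.card_prod, Fintype.card_bool,
      Fintype.card_fun, ZMod.card]
    ring
  · -- generated by rho, mu, sigma_0
    set K := Subgroup.closure {wRho n, wMu n, sigmaSwap n 0} with hK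
    have hρ : wRho n ∈ K := Subgroup.subset_closure (by simp)
    have hμ : wMu n ∈ K := Subgroup.subset_closure (by simp)
    have hσ0 : sigmaSwap n 0 ∈ K := Subgroup.subset_closure (by simp)
    have sigma_mem : ∀ i, sigmaSwap n i ∈ K := by
      intro i
      have hcalc : sigmaSwap n i =
          (wRho n) ^ (i.val) * sigmaSwap n 0 * ((wRho n) ^ (i.val))⁻¹ := by
        rw [sigmaSwap, sigmaSwap, ← Equiv.swap_apply_apply]
        rw [rho_pow, rho_pow]
        simp [ZMod.natCast_zmod_val]
      rw [hcalc]
      exact mul_mem (mul_mem (pow_mem hρ _) hσ0) (inv_mem (pow_mem hρ _))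
    apply le_antisymm
    · intro g hg
      obtain ⟨ε, c, t, rfl⟩ := aut_nf hn hn4 hg
      have hdecomp : nf n ε c t =
          (wRho n) ^ (c.val) * (wMu n) ^ (if ε then 0 else 1) * nf n true 0 t := by
        apply Equiv.ext
        rintro ⟨i, s⟩
        rw [Equiv.Perm.mul_apply, Equiv.Perm.mul_apply, nf_apply, nf_apply]
        cases ε
        · rw [if_neg (by simp), pow_one]
          have hmu : wMu n ((dih n true 0 (i, s).1, flipIf (t (i, s).1) s)) =
              (-(dih n true 0 i), flipIf (t i) s) := rfl
          rw [hmu, rho_pow]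
          refine prodext ?_ rfl
          simp [ZMod.natCast_zmod_val]
          ring
        · rw [if_pos rfl, pow_zero, Equiv.Perm.one_apply, rho_pow]
          refine prodext ?_ rfl
          simp [ZMod.natCast_zmod_val]
          ring
      rw [hdecomp]
      exact mul_mem (mul_mem (pow_mem hρ _) (pow_mem hμ _)) (nf_swaps_mem K sigma_mem t)
    · apply (Subgroup.closure_le _).mpr
      intro x hx
      simp only [Set.mem_insert_iff, Set.mem_singleton_iff] at hx
      rcases hx with rfl | rfl | rfl
      · rw [rho_eq]; exact nfmem _ _ _
      · rw [mu_eq]; exact nfmem _ _ _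
      · rw [sigma_eq]; exact nfmem _ _ _
  · -- closure of swaps inside aut
    apply (Subgroup.closure_le _).mpr
    rintro x ⟨i, rfl⟩
    rw [sigma_eq]
    exact nfmem _ _ _
  · -- normality
    intro g hg x hx
    obtain ⟨ε, c, t, rfl⟩ := aut_nf hn hn4 hg
    have himg : (MulAut.conj (nf n ε c t)) '' (Set.range (sigmaSwap n)) ⊆
        Set.range (sigmaSwap n) := by
      rintro y ⟨_, ⟨i, rfl⟩, rfl⟩
      refine ⟨dih n ε c i, ?_⟩
      rw [MulAut.conj_apply]
      simp only [sigmaSwap]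
      rw [← Equiv.swap_apply_apply]
      have e0 : nf n ε c t (i, 0) = (dih n ε c i, flipIf (t i) 0) := rfl
      have e1 : nf n ε c t (i, 1) = (dih n ε c i, flipIf (t i) 1) := rfl
      rw [e0, e1]
      cases ht : t i
      · rw [flipIf_false, flipIf_false]
      · rw [show flipIf true (0 : Fin 2) = 1 from by decide,
          show flipIf true (1 : Fin 2) = 0 from by decide]
        exact Equiv.swap_comm _ _
    have hx' : (MulAut.conj (nf n ε c t)).toMonoidHom x ∈
        (Subgroup.closure (Set.range (sigmaSwap n))).map
          (MulAut.conj (nf n ε c t)).toMonoidHom :=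
      Subgroup.mem_map_of_mem _ hx
    rw [MonoidHom.map_closure] at hx'
    have key := Subgroup.closure_mono himg hx'
    simpa using key
end

section
/- Let Γ be a finite connected 4-regular graph with a group G acting regularly on its arcs, and suppose the vertex stabilizers G_v are isomorphic to ℤ/2 × ℤ/2. Then for every G-consistent directed cycle C⃗ through a vertex v, there is an element of G_v mapping C⃗ to its reverse; that is, every G-consistent cycle is G-symmetric. -/
theorem stmt_13 {V : Type*} [Fintype V] (Γ : SimpleGraph V)
    (hconn : Γ.Connected)
    (hreg : ∀ v : V, Nat.card (Γ.neighborSet v) = 4)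
    (G : Subgroup (Equiv.Perm V))
    (hG : ∀ g ∈ G, ∀ u v : V, Γ.Adj u v ↔ Γ.Adj (g u) (g v))
    (htrans : ∀ u v u' v' : V, Γ.Adj u v → Γ.Adj u' v' →
      ∃ g ∈ G, g u = u' ∧ g v = v')
    (hfree : ∀ g ∈ G, ∀ u v : V, Γ.Adj u v → g u = u → g v = v → g = 1)
    (hstab : ∀ v : V,
      Nonempty (MulAction.stabilizer G v ≃* Multiplicative (ZMod 2 × ZMod 2)))
    (r : ℕ) (hr : 3 ≤ r) (c : ZMod r → V) (hinj : Function.Injective c)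
    (hadj : ∀ i, Γ.Adj (c i) (c (i + 1)))
    (hcons : ∃ g ∈ G, ∀ i, g (c i) = c (i + 1)) :
    ∃ h ∈ G, h (c 0) = c 0 ∧ ∀ i, h (c i) = c (-i) := by
  haveI : NeZero r := ⟨by omega⟩
  obtain ⟨g, hgG, hg⟩ := hcons
  -- adjacency of c 0 and c (-1)
  have hadjm : Γ.Adj (c 0) (c (-1)) := by
    have := hadj (-1)
    simpa using this.symm
  obtain ⟨h, hhG, hh0, hh1⟩ := htrans (c 0) (c 1) (c 0) (c (-1)) (by simpa using hadj 0) hadjm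
  -- h is an involution
  have hh2 : h * h = 1 := by
    have hzmem : (⟨h, hhG⟩ : G) ∈ MulAction.stabilizer G (c 0) := by
      show (⟨h, hhG⟩ : G) • c 0 = c 0
      exact hh0
    set z : MulAction.stabilizer G (c 0) := ⟨⟨h, hhG⟩, hzmem⟩ with hz
    obtain ⟨φ⟩ := hstab (c 0)
    have h2 : ∀ x : Multiplicative (ZMod 2 × ZMod 2), x * x = 1 := by decide
    have : z * z = 1 := by
      apply φ.injective
      rw [map_mul, map_one]
      exact h2 (φ z)
    have h3 := congrArg Subtype.val this
    have h4 := congrArg Subtype.val h3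
    simpa using h4
  have hinvh : h⁻¹ = h := inv_eq_of_mul_eq_one_left hh2
  -- key equation: h * g⁻¹ * h = g, from freeness
  have hg0 : g (c 0) = c 1 := by simpa using hg 0
  have hgm : g (c (-1)) = c 0 := by simpa using hg (-1)
  have hginv0 : g⁻¹ (c 1) = c 0 := by
    rw [← hg0]; exact Equiv.symm_apply_apply g (c 0)
  have hginvm : g⁻¹ (c 0) = c (-1) := by
    rw [← hgm]; exact Equiv.symm_apply_apply g (c (-1))
  have hhm : h (c (-1)) = c 1 := by
    have := congrArg (fun p : Equiv.Perm V => p (c 1)) hh2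
    simp only [Equiv.Perm.mul_apply, Equiv.Perm.one_apply] at this
    rw [hh1] at this
    exact this
  have hkey : h * g⁻¹ * h = g := by
    have emem : g⁻¹ * (h * g⁻¹ * h) ∈ G := by
      exact mul_mem (inv_mem hgG) (mul_mem (mul_mem hhG (inv_mem hgG)) hhG)
    have e1 : (g⁻¹ * (h * g⁻¹ * h)) (c (-1)) = c (-1) := by
      simp only [Equiv.Perm.mul_apply]
      rw [hhm, hginv0, hh0, hginvm]
    have e2 : (g⁻¹ * (h * g⁻¹ * h)) (c 0) = c 0 := by
      simp only [Equiv.Perm.mul_apply]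
      rw [hh0, hginvm, hhm, hginv0]
    have := hfree _ emem _ _ hadjm.symm e1 e2
    have := congrArg (fun p => g * p) this
    simpa [mul_assoc] using this
  have hconj : ∀ n : ℕ, h * g ^ n * h = (g ^ n)⁻¹ := by
    intro n
    have : h * g ^ n * h⁻¹ = (h * g * h⁻¹) ^ n := by
      rw [← conj_pow]
    rw [hinvh] at this
    rw [this]
    have hghg : h * g * h = g⁻¹ := by
      have := congrArg (fun p => p⁻¹) hkey
      simpa [mul_inv_rev, hinvh, mul_assoc] using this
    rw [hghg, inv_pow]
  -- powers of g shift the cycle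
  have key : ∀ n : ℕ, ∀ j : ZMod r, (g ^ n) (c j) = c (j + n) := by
    intro n
    induction n with
    | zero => intro j; simp
    | succ n ih =>
      intro j
      rw [pow_succ]
      simp only [Equiv.Perm.mul_apply]
      rw [hg j, ih (j + 1)]
      congr 1
      push_cast
      ring
  refine ⟨h, hhG, hh0, ?_⟩
  intro i
  have hi : ((i.val : ℕ) : ZMod r) = i := ZMod.natCast_rightInverse i
  set n := i.val with hn
  have hci : c i = (g ^ n) (c 0) := by
    rw [key n 0, zero_add, hi]
  have hcneg : (g ^ n)⁻¹ (c 0) = c (-i) := by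
    have := key n (-i)
    rw [hi, neg_add_cancel] at this
    rw [← this]
    exact Equiv.symm_apply_apply (g ^ n) (c (-i))
  rw [hci, ← hcneg]
  have := congrArg (fun p : Equiv.Perm V => p (c 0)) (hconj n)
  simp only [Equiv.Perm.mul_apply] at this
  rw [hh0] at this
  exact this
end

section
/- Let Γ be a finite connected 4-regular graph with a group G acting regularly on its arcs, and suppose the vertex stabilizer of some vertex v is cyclic of order 4, generated by β. Let u be a neighbor of v. Then no element of G fixes v and swaps u with u·β; consequently there is a G-consistent directed cycle through (u, v, u·β) whose reverse lies in a different G-orbit (a G-chiral consistent cycle exists). -/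
theorem stmt_14 {V : Type*} [Fintype V] (Γ : SimpleGraph V)
    (hconn : Γ.Connected)
    (hreg : ∀ v : V, Nat.card (Γ.neighborSet v) = 4)
    (G : Subgroup (Equiv.Perm V))
    (hG : ∀ g ∈ G, ∀ u v : V, Γ.Adj u v ↔ Γ.Adj (g u) (g v))
    (htrans : ∀ u v u' v' : V, Γ.Adj u v → Γ.Adj u' v' →
      ∃ g ∈ G, g u = u' ∧ g v = v')
    (hfree : ∀ g ∈ G, ∀ u v : V, Γ.Adj u v → g u = u → g v = v → g = 1)
    (v : V) (β : Equiv.Perm V) (hβG : β ∈ G) (hβv : β v = v)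
    (hgen : ∀ g ∈ G, g v = v → ∃ k : ℕ, g = β ^ k)
    (hcard : Nat.card {g : G // (g : Equiv.Perm V) v = v} = 4)
    (u : V) (hu : Γ.Adj v u) :
    (¬ ∃ g ∈ G, g v = v ∧ g u = β u ∧ g (β u) = u) ∧
    ∃ (r : ℕ) (_ : 3 ≤ r) (c : ZMod r → V), Function.Injective c ∧
      (∀ i, Γ.Adj (c i) (c (i + 1))) ∧
      c 0 = u ∧ c 1 = v ∧ c 2 = β u ∧
      (∃ g ∈ G, ∀ i, g (c i) = c (i + 1)) ∧
      ¬ ∃ h ∈ G, ∃ k : ZMod r, ∀ i, h (c i) = c (k - i) := by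
  classical
  have hβinv : β⁻¹ v = v := by
    conv_lhs => rw [← hβv]
    simp
  -- β u ≠ u
  have hβu_ne : β u ≠ u := by
    intro h
    have hβ1 : β = 1 := hfree β hβG v u hu hβv h
    have hsub : ∀ x : {g : G // (g : Equiv.Perm V) v = v},
        (x : G) = (1 : G) := by
      rintro ⟨⟨gp, hgpG⟩, hx⟩
      obtain ⟨k, hk⟩ := hgen gp hgpG hx
      apply Subtype.ext
      show gp = 1
      rw [hk, hβ1, one_pow]
    have hinj : Function.Injective
        (fun _ : {g : G // (g : Equiv.Perm V) v = v} => (0 : Fin 1)) := by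
      intro x y _
      exact Subtype.ext ((hsub x).trans (hsub y).symm)
    have hle := Nat.card_le_card_of_injective _ hinj
    rw [hcard, Nat.card_eq_fintype_card, Fintype.card_fin] at hle
    omega
  -- Part 1 : no swap
  have key1 : ¬ ∃ g ∈ G, g v = v ∧ g u = β u ∧ g (β u) = u := by
    rintro ⟨g, hgG, hgv, hgu, hgβu⟩
    -- β⁻¹ * g fixes the arc (v, u), hence g = β
    have h1 : β⁻¹ * g ∈ G := G.mul_mem (G.inv_mem hβG) hgG
    have h2 : (β⁻¹ * g) v = v := by
      simp [Equiv.Perm.mul_apply, hgv, hβinv]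
    have h3 : (β⁻¹ * g) u = u := by
      simp [Equiv.Perm.mul_apply, hgu]
    have h4 : β⁻¹ * g = 1 := hfree _ h1 v u hu h2 h3
    have hgβ : g = β := by
      have := congrArg (β * ·) h4
      simpa [mul_assoc] using this
    -- so β ^ 2 fixes the arc (v, u), hence β ^ 2 = 1
    have hβ2 : β ^ 2 = 1 := by
      apply hfree _ (pow_mem hβG 2) v u hu
      · rw [sq, Equiv.Perm.mul_apply, hβv, hβv]
      · rw [sq, Equiv.Perm.mul_apply]
        rw [hgβ] at hgβu
        exact hgβu
    -- then every power of β is 1 or β, so the stabilizer has ≤ 2 elements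
    have hpow : ∀ k : ℕ, β ^ k = 1 ∨ β ^ k = β := by
      intro k
      rcases Nat.even_or_odd k with ⟨m, hm⟩ | ⟨m, hm⟩
      · left
        have : k = 2 * m := by omega
        rw [this, pow_mul, hβ2, one_pow]
      · right
        rw [hm, pow_add, pow_mul, hβ2, one_pow, pow_one, one_mul]
    have hmem : ∀ x : {g : G // (g : Equiv.Perm V) v = v},
        ((x : G) : Equiv.Perm V) = 1 ∨ ((x : G) : Equiv.Perm V) = β := by
      rintro ⟨⟨gp, hgpG⟩, hx⟩
      obtain ⟨k, hk⟩ := hgen gp hgpG hx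
      show gp = 1 ∨ gp = β
      rw [hk]
      exact hpow k
    have hinj : Function.Injective
        (fun x : {g : G // (g : Equiv.Perm V) v = v} =>
          (decide (((x : G) : Equiv.Perm V) = 1) : Bool)) := by
      intro x y hxy
      simp only [decide_eq_decide] at hxy
      have hx := hmem x
      have hy := hmem y
      have : ((x : G) : Equiv.Perm V) = ((y : G) : Equiv.Perm V) := by
        by_cases h : ((x : G) : Equiv.Perm V) = 1
        · rw [h, (hxy.mp h).symm]
        · rcases hx with h' | h'
          · exact absurd h' h
          · rcases hy with h'' | h''
            · exact absurd (hxy.mpr h'') h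
            · rw [h', h'']
      exact Subtype.ext (Subtype.ext this)
    have hle := Nat.card_le_card_of_injective _ hinj
    rw [hcard, Nat.card_eq_fintype_card, Fintype.card_bool] at hle
    omega
  refine ⟨key1, ?_⟩
  -- get the shunt candidate g with g u = v, g v = β u
  have hadj_vβu : Γ.Adj v (β u) := by
    have := (hG β hβG v u).mp hu
    rwa [hβv] at this
  obtain ⟨g, hgG, hgu, hgv⟩ := htrans u v v (β u) hu.symm hadj_vβu
  -- the minimal period r of u under g
  have hex : ∃ n : ℕ, 0 < n ∧ (g ^ n) u = u := by
    refine ⟨orderOf g, ?_, ?_⟩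
    · exact orderOf_pos g
    · rw [pow_orderOf_eq_one g]; rfl
  set r := Nat.find hex with hrdef
  obtain ⟨hrpos, hgr⟩ : 0 < r ∧ (g ^ r) u = u := Nat.find_spec hex
  have hmin : ∀ m, m < r → ¬(0 < m ∧ (g ^ m) u = u) := fun m hm => Nat.find_min hex hm
  -- r ≥ 3
  have hg2u : (g ^ 2) u = β u := by
    rw [sq, Equiv.Perm.mul_apply, hgu, hgv]
  have hr3 : 3 ≤ r := by
    by_contra hlt
    interval_cases r
    · have : (g ^ 1) u = u := hgr
      rw [pow_one, hgu] at this
      exact hu.ne this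
    · rw [hg2u] at hgr
      exact hβu_ne hgr
  haveI : NeZero r := ⟨by omega⟩
  -- the cycle
  set c : ZMod r → V := fun i => (g ^ i.val) u with hcdef
  have hq : ∀ q : ℕ, ((g ^ r) ^ q) u = u := by
    intro q
    induction q with
    | zero => simp
    | succ n ih => rw [pow_succ, Equiv.Perm.mul_apply, hgr, ih]
  have L : ∀ a : ℕ, (g ^ a) u = (g ^ (a % r)) u := by
    intro a
    conv_lhs => rw [← Nat.mod_add_div a r]
    rw [pow_add, pow_mul, Equiv.Perm.mul_apply, hq]
  have Lc : ∀ a : ℕ, c ((a : ℕ) : ZMod r) = (g ^ a) u := by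
    intro a
    show (g ^ ((a : ZMod r)).val) u = _
    rw [ZMod.val_natCast]
    exact (L a).symm
  have Ladd : ∀ (i : ZMod r) (n : ℕ), (g ^ n) (c i) = c (i + (n : ZMod r)) := by
    intro i n
    have h1 : (g ^ n) (c i) = (g ^ (n + i.val)) u := by
      rw [pow_add, Equiv.Perm.mul_apply]
    rw [h1, ← Lc (n + i.val)]
    congr 1
    push_cast
    rw [ZMod.natCast_rightInverse i]
    ring
  -- injectivity
  have hkey : ∀ a b : ZMod r, a.val ≤ b.val → c a = c b → a = b := by
    intro a b hab hcab
    have hcomm : g ^ b.val * (g ^ a.val)⁻¹ = (g ^ a.val)⁻¹ * g ^ b.val :=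
      (((Commute.refl g).pow_pow b.val a.val).inv_right).eq
    have hcab' : (g ^ a.val) u = (g ^ b.val) u := hcab
    have h1 : (g ^ (b.val - a.val)) u = u := by
      rw [pow_sub g hab, hcomm, Equiv.Perm.mul_apply, ← hcab',
        ← Equiv.Perm.mul_apply, inv_mul_cancel, Equiv.Perm.one_apply]
    have h2 : b.val - a.val < r := by
      have := ZMod.val_lt b
      omega
    have := hmin _ h2
    have h3 : b.val - a.val = 0 := by
      by_contra h
      exact this ⟨by omega, h1⟩
    exact ZMod.val_injective r (by omega)
  have hinj : Function.Injective c := by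
    intro i j hij
    rcases le_total i.val j.val with h | h
    · exact hkey i j h hij
    · exact (hkey j i h hij.symm).symm
  -- adjacency
  have hc_succ : ∀ i : ZMod r, c (i + 1) = g (c i) := by
    intro i
    have := Ladd i 1
    rw [pow_one, Nat.cast_one] at this
    exact this.symm
  have hadjc : ∀ i : ZMod r, Γ.Adj (c i) (c (i + 1)) := by
    intro i
    rw [hc_succ i]
    have h2 : Γ.Adj u (g u) := by rw [hgu]; exact hu.symm
    have h3 := (hG (g ^ i.val) (pow_mem hgG _) u (g u)).mp h2
    have h4 : (g ^ i.val) (g u) = g ((g ^ i.val) u) := by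
      rw [← Equiv.Perm.mul_apply, ← Equiv.Perm.mul_apply,
        (((Commute.refl g).pow_left i.val)).eq]
    rwa [h4] at h3
  have hc0 : c 0 = u := by
    have := Lc 0
    simpa using this
  have hc1 : c 1 = v := by
    have := Lc 1
    rw [pow_one, hgu] at this
    simpa using this
  have hc2 : c 2 = β u := by
    have := Lc 2
    rw [hg2u] at this
    rw [← this]
    norm_num
  refine ⟨r, hr3, c, hinj, hadjc, hc0, hc1, hc2, ⟨g, hgG, fun i => ?_⟩, ?_⟩
  · rw [hc_succ i]
  -- chirality
  rintro ⟨h, hhG, k, hk⟩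
  set j : ℕ := (2 - k : ZMod r).val with hjdef
  have hjcast : ((j : ℕ) : ZMod r) = 2 - k := ZMod.natCast_rightInverse _
  have hfmem : g ^ j * h ∈ G := G.mul_mem (pow_mem hgG j) hhG
  have hf : ∀ i : ZMod r, (g ^ j * h) (c i) = c (2 - i) := by
    intro i
    rw [Equiv.Perm.mul_apply, hk i, Ladd, hjcast]
    ring_nf
  apply key1
  refine ⟨g ^ j * h, hfmem, ?_, ?_, ?_⟩
  · have := hf 1
    rw [hc1] at this
    rw [this]
    norm_num
    rw [hc1]
  · have := hf 0
    rw [hc0] at this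
    rw [this]
    norm_num
    rw [hc2]
  · have := hf 2
    rw [hc2] at this
    rw [this]
    norm_num
    rw [hc0]
end
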